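/- (Artin–Whaples weak approximation theorem) Let K be a field equipped with nontrivial, pairwise inequivalent absolute values |·|₁, |·|₂, …, |·|ₙ. Then for all x₁, …, xₙ ∈ K and every ε > 0, there exists x ∈ K such that |x − xᵢ|ᵢ < ε for every i ∈ {1, …, n}. -/

import Mathlib

open Filter Topology

/-- The topology on a field `K` induced by an absolute value `f : K → ℝ`,
namely the topology of the metric `d(x,y) = f (x - y)`, generated by the open balls. -/
def absTopology {K : Type*} [Field K] (f : AbsoluteValue K ℝ) : TopologicalSpace K :=
  TopologicalSpace.generateFrom
    {s : Set K | ∃ (a : K) (r : ℝ), 0 < r ∧ s = {x : K | f (x - a) < r}}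

section Aux

variable {K : Type*} [Field K]

/-- From nontriviality, get an element of absolute value strictly between 0 and 1. -/
lemma aux_exists_small (f : AbsoluteValue K ℝ) (h : ∃ x : K, x ≠ 0 ∧ f x ≠ 1) :
    ∃ c : K, c ≠ 0 ∧ 0 < f c ∧ f c < 1 := by
  obtain ⟨x, hx0, hx1⟩ := h
  rcases lt_or_gt_of_ne hx1 with h1 | h1
  · exact ⟨x, hx0, f.pos hx0, h1⟩
  · refine ⟨x⁻¹, inv_ne_zero hx0, ?_, ?_⟩ <;> rw [map_inv₀]
    · exact inv_pos.mpr (f.pos hx0)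
    · exact inv_lt_one_of_one_lt₀ h1

/-- If `f x < 1` implies `g x < 1` everywhere, and `f` is nontrivial,
then the open unit balls of `f` and `g` coincide. -/
lemma balls_eq_of_imp (f g : AbsoluteValue K ℝ)
    (hsmall : ∃ c : K, c ≠ 0 ∧ 0 < f c ∧ f c < 1)
    (H : ∀ x : K, f x < 1 → g x < 1) :
    ∀ x : K, f x < 1 ↔ g x < 1 := by
  intro x
  refine ⟨H x, fun hg => ?_⟩
  by_contra hf
  push_neg at hf
  have hx0 : x ≠ 0 := by
    rintro rfl
    rw [map_zero] at hf
    linarith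
  obtain ⟨c, hc0, hcpos, hc1⟩ := hsmall
  have key : ∀ m : ℕ, g c < (g x) ^ m := by
    intro m
    have hxinv : f x⁻¹ ≤ 1 := by
      rw [map_inv₀]
      exact inv_le_one_of_one_le₀ hf
    have h1 : f (c * (x⁻¹) ^ m) < 1 := by
      rw [map_mul, map_pow]
      calc f c * (f x⁻¹) ^ m ≤ f c * 1 :=
            mul_le_mul_of_nonneg_left (pow_le_one₀ (f.nonneg _) hxinv) hcpos.le
        _ = f c := mul_one _
        _ < 1 := hc1
    have h2 := H _ h1
    rw [map_mul, map_pow, map_inv₀] at h2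
    have hgx : 0 < g x := g.pos hx0
    have hpow : 0 < (g x) ^ m := pow_pos hgx m
    rw [inv_pow, ← div_eq_mul_inv, div_lt_one hpow] at h2
    exact h2
  obtain ⟨m, hm⟩ := exists_pow_lt_of_lt_one (g.pos hc0) hg
  exact absurd (key m) (not_lt.mpr hm.le)

/-- If the unit balls coincide and `f` is nontrivial, then for every `t > 0`
there is `s > 0` with `g y < s → f y < t`. -/
lemma shrink (f g : AbsoluteValue K ℝ)
    (hiff : ∀ x : K, f x < 1 ↔ g x < 1)
    (hsmall : ∃ c : K, c ≠ 0 ∧ 0 < f c ∧ f c < 1) :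
    ∀ t : ℝ, 0 < t → ∃ s : ℝ, 0 < s ∧ ∀ y : K, g y < s → f y < t := by
  intro t ht
  obtain ⟨c, hc0, hcpos, hc1⟩ := hsmall
  have hgcpos : 0 < g c := g.pos hc0
  obtain ⟨m, hm⟩ := exists_pow_lt_of_lt_one ht hc1
  refine ⟨(g c) ^ m, pow_pos hgcpos m, fun y hy => ?_⟩
  have h1 : g (y / c ^ m) < 1 := by
    rw [map_div₀, map_pow]
    exact (div_lt_one (pow_pos hgcpos m)).mpr hy
  have h2 := (hiff _).2 h1
  rw [map_div₀, map_pow] at h2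
  have := (div_lt_one (pow_pos hcpos m)).mp h2
  linarith

/-- If the unit balls of `f` and `g` coincide (and `f` is nontrivial)
then they induce the same topology. -/
lemma topology_eq (f g : AbsoluteValue K ℝ)
    (hiff : ∀ x : K, f x < 1 ↔ g x < 1)
    (hsmall : ∃ c : K, c ≠ 0 ∧ 0 < f c ∧ f c < 1) :
    absTopology f = absTopology g := by
  have hsmall' : ∃ c : K, c ≠ 0 ∧ 0 < g c ∧ g c < 1 := by
    obtain ⟨c, hc0, _, hc1⟩ := hsmall
    exact ⟨c, hc0, g.pos hc0, (hiff c).1 hc1⟩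
  have main : ∀ (f g : AbsoluteValue K ℝ), (∀ x : K, f x < 1 ↔ g x < 1) →
      (∃ c : K, c ≠ 0 ∧ 0 < f c ∧ f c < 1) → absTopology g ≤ absTopology f := by
    intro f g hiff hsmall
    apply le_generateFrom
    rintro s ⟨a, r, hr, rfl⟩
    letI : TopologicalSpace K := absTopology g
    rw [isOpen_iff_forall_mem_open]
    intro b hb
    simp only [Set.mem_setOf_eq] at hb
    obtain ⟨sδ, hsδ, hball⟩ := shrink f g hiff hsmall (r - f (b - a)) (by linarith)
    refine ⟨{x : K | g (x - b) < sδ}, ?_, ?_, ?_⟩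
    · intro x hx
      simp only [Set.mem_setOf_eq] at hx ⊢
      have h1 : f (x - b) < r - f (b - a) := hball _ hx
      have h2 : f (x - a) ≤ f (x - b) + f (b - a) := by
        calc f (x - a) = f ((x - b) + (b - a)) := by ring_nf
          _ ≤ f (x - b) + f (b - a) := f.add_le _ _
      linarith
    · exact TopologicalSpace.isOpen_generateFrom_of_mem ⟨b, sδ, hsδ, rfl⟩
    · simp only [Set.mem_setOf_eq, sub_self, map_zero]; exact hsδ
  exact le_antisymm (main g f (fun x => (hiff x).symm) hsmall') (main f g hiff hsmall)

/-- If `1 < f z` then `f (z^m/(1+z^m) - 1) → 0`. -/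
lemma tendsto_L6 (f : AbsoluteValue K ℝ) {z : K} (h : 1 < f z) :
    Tendsto (fun m : ℕ => f (z ^ m / (1 + z ^ m) - 1)) atTop (𝓝 0) := by
  have hz : Tendsto (fun m : ℕ => (f z) ^ m) atTop atTop :=
    tendsto_pow_atTop_atTop_of_one_lt h
  have hb : Tendsto (fun m : ℕ => ((f z) ^ m - 1)⁻¹) atTop (𝓝 0) := by
    have := (tendsto_atTop_add_const_right atTop (-1 : ℝ) hz).inv_tendsto_atTop
    simpa [sub_eq_add_neg, Pi.inv_def] using this
  apply squeeze_zero' (Eventually.of_forall fun m => f.nonneg _) ?_ hb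
  filter_upwards [eventually_ge_atTop 1] with m hm
  have h1 : 1 < (f z) ^ m := one_lt_pow₀ h (by omega)
  have hfz : (f z) ^ m - 1 ≤ f (1 + z ^ m) := by
    have h2 : f (z ^ m) ≤ f (1 + z ^ m) + 1 := by
      calc f (z ^ m) = f ((1 + z ^ m) + (-1)) := by ring_nf
        _ ≤ f (1 + z ^ m) + f (-1) := f.add_le _ _
        _ = f (1 + z ^ m) + 1 := by rw [f.map_neg, map_one]
    rw [map_pow] at h2
    linarith
  have hpos : 0 < f (1 + z ^ m) := lt_of_lt_of_le (by linarith) hfz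
  have hne : (1 : K) + z ^ m ≠ 0 := fun h0 => by
    rw [h0, map_zero] at hpos; linarith
  have heq : z ^ m / (1 + z ^ m) - 1 = (-1) / (1 + z ^ m) := by
    rw [div_sub_one hne]; ring_nf
  rw [heq, map_div₀, f.map_neg, map_one, ← one_div]
  exact one_div_le_one_div_of_le (by linarith) hfz

/-- If `f z < 1` then `f (z^m/(1+z^m)) → 0`. -/
lemma tendsto_L7 (f : AbsoluteValue K ℝ) {z : K} (h : f z < 1) :
    Tendsto (fun m : ℕ => f (z ^ m / (1 + z ^ m))) atTop (𝓝 0) := by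
  have hz : Tendsto (fun m : ℕ => (f z) ^ m) atTop (𝓝 0) :=
    tendsto_pow_atTop_nhds_zero_of_lt_one (f.nonneg z) h
  have hb : Tendsto (fun m : ℕ => (f z) ^ m / (1 - (f z) ^ m)) atTop (𝓝 0) := by
    have := Filter.Tendsto.div hz
      ((tendsto_const_nhds : Tendsto (fun _ : ℕ => (1 : ℝ)) atTop (𝓝 1)).sub hz)
      (by norm_num : (1 : ℝ) - 0 ≠ 0)
    rw [sub_zero, zero_div] at this
    exact this
  apply squeeze_zero' (Eventually.of_forall fun m => f.nonneg _) ?_ hb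
  filter_upwards [eventually_ge_atTop 1] with m hm
  have h1 : (f z) ^ m < 1 := pow_lt_one₀ (f.nonneg z) h (by omega)
  have hfz : 1 - (f z) ^ m ≤ f (1 + z ^ m) := by
    have h2 : f 1 ≤ f (1 + z ^ m) + f (z ^ m) := by
      calc f 1 = f ((1 + z ^ m) + (-(z ^ m))) := by ring_nf
        _ ≤ f (1 + z ^ m) + f (-(z ^ m)) := f.add_le _ _
        _ = f (1 + z ^ m) + f (z ^ m) := by rw [f.map_neg]
    rw [map_one, map_pow] at h2
    linarith
  have hpos : 0 < f (1 + z ^ m) := lt_of_lt_of_le (by linarith) hfz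
  rw [map_div₀, map_pow]
  exact div_le_div_of_nonneg_left (pow_nonneg (f.nonneg z) m) (by linarith) hfz

/-- Main Artin–Whaples lemma. -/
lemma main_lemma {n : ℕ} (f : Fin n → AbsoluteValue K ℝ)
    (hnontriv : ∀ i, ∃ x : K, x ≠ 0 ∧ f i x ≠ 1)
    (hpair : ∀ i j, i ≠ j → ∃ a : K, f j a < 1 ∧ 1 ≤ f i a) :
    ∀ (i : Fin n) (S : Finset (Fin n)), i ∉ S →
      ∃ z : K, 1 < f i z ∧ ∀ j ∈ S, f j z < 1 := by
  intro i S
  induction S using Finset.induction_on with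
  | empty =>
    intro _
    obtain ⟨x, hx0, hx1⟩ := hnontriv i
    rcases lt_or_gt_of_ne hx1 with h1 | h1
    · refine ⟨x⁻¹, ?_, by simp⟩
      rw [map_inv₀]
      exact (one_lt_inv₀ ((f i).pos hx0)).mpr h1
    · exact ⟨x, h1, by simp⟩
  | @insert k S hk ih =>
    intro hiS
    have hik : i ≠ k := fun h => hiS (h ▸ Finset.mem_insert_self k S)
    have hiS' : i ∉ S := fun h => hiS (Finset.mem_insert_of_mem h)
    obtain ⟨z, hz1, hzS⟩ := ih hiS'
    obtain ⟨a, hak, hai⟩ := hpair i k hik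
    obtain ⟨b, hbi, hbk⟩ := hpair k i hik.symm
    have hbne : b ≠ 0 := fun h => by rw [h, map_zero] at hbk; linarith
    set w := a / b with hw
    have hw1 : 1 < f i w := by
      rw [hw, map_div₀]
      exact (one_lt_div ((f i).pos hbne)).mpr (lt_of_lt_of_le hbi hai)
    have hwk : f k w < 1 := by
      rw [hw, map_div₀]
      exact lt_of_le_of_lt (div_le_self ((f k).nonneg a) hbk) hak
    rcases lt_trichotomy (f k z) 1 with hkz | hkz | hkz
    · refine ⟨z, hz1, fun j hj => ?_⟩
      rcases Finset.mem_insert.mp hj with rfl | hj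
      · exact hkz
      · exact hzS j hj
    · -- f k z = 1 : use z^m * w for m large
      have hev : ∀ j ∈ S, ∀ᶠ m : ℕ in atTop, (f j z) ^ m * f j w < 1 := by
        intro j hj
        have h0 : Tendsto (fun m : ℕ => (f j z) ^ m * f j w) atTop (𝓝 (0 * f j w)) :=
          (tendsto_pow_atTop_nhds_zero_of_lt_one ((f j).nonneg z) (hzS j hj)).mul_const _
        rw [zero_mul] at h0
        exact h0.eventually_lt_const zero_lt_one
      obtain ⟨m, hm⟩ := ((eventually_all_finset S).2 hev).exists
      refine ⟨z ^ m * w, ?_, fun j hj => ?_⟩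
      · rw [map_mul, map_pow]
        calc (1 : ℝ) < f i w := hw1
          _ = 1 * f i w := (one_mul _).symm
          _ ≤ (f i z) ^ m * f i w :=
            mul_le_mul_of_nonneg_right (one_le_pow₀ hz1.le) ((f i).nonneg w)
      · rw [map_mul, map_pow]
        rcases Finset.mem_insert.mp hj with rfl | hj
        · rw [hkz, one_pow, one_mul]; exact hwk
        · exact hm j hj
    · -- f k z > 1 : use z^m/(1+z^m) * w for m large
      have hSmall : ∀ j ∈ S, ∀ᶠ m : ℕ in atTop, f j (z ^ m / (1 + z ^ m) * w) < 1 := by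
        intro j hj
        have h0 := (tendsto_L7 (f j) (hzS j hj)).mul_const (f j w)
        rw [zero_mul] at h0
        have h1 : Tendsto (fun m : ℕ => f j (z ^ m / (1 + z ^ m) * w)) atTop (𝓝 0) := by
          refine h0.congr fun m => ?_
          rw [map_mul]
        exact h1.eventually_lt_const zero_lt_one
      have hI : ∀ᶠ m : ℕ in atTop, 1 < f i (z ^ m / (1 + z ^ m) * w) := by
        have h0 := (tendsto_L6 (f i) hz1).const_mul (f i w)
        rw [mul_zero] at h0
        have hev := h0.eventually_lt_const (show (0 : ℝ) < f i w - 1 by linarith)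
        filter_upwards [hev] with m hm
        have key : f i (z ^ m / (1 + z ^ m) * w - w)
            = f i w * f i (z ^ m / (1 + z ^ m) - 1) := by
          rw [show z ^ m / (1 + z ^ m) * w - w = (z ^ m / (1 + z ^ m) - 1) * w from by ring,
            map_mul, mul_comm]
        have htri : f i w ≤ f i (z ^ m / (1 + z ^ m) * w)
            + f i (z ^ m / (1 + z ^ m) * w - w) := by
          calc f i w = f i (z ^ m / (1 + z ^ m) * w
                + -(z ^ m / (1 + z ^ m) * w - w)) := by ring_nf
            _ ≤ f i (z ^ m / (1 + z ^ m) * w)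
                + f i (-(z ^ m / (1 + z ^ m) * w - w)) := (f i).add_le _ _
            _ = f i (z ^ m / (1 + z ^ m) * w)
                + f i (z ^ m / (1 + z ^ m) * w - w) := by rw [(f i).map_neg]
        rw [key] at htri
        linarith
      have hK : ∀ᶠ m : ℕ in atTop, f k (z ^ m / (1 + z ^ m) * w) < 1 := by
        have h0 := (tendsto_L6 (f k) hkz).const_mul (f k w)
        rw [mul_zero] at h0
        have hev := h0.eventually_lt_const (show (0 : ℝ) < 1 - f k w by linarith)
        filter_upwards [hev] with m hm
        have key : f k (z ^ m / (1 + z ^ m) * w - w)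
            = f k w * f k (z ^ m / (1 + z ^ m) - 1) := by
          rw [show z ^ m / (1 + z ^ m) * w - w = (z ^ m / (1 + z ^ m) - 1) * w from by ring,
            map_mul, mul_comm]
        have htri : f k (z ^ m / (1 + z ^ m) * w)
            ≤ f k w + f k (z ^ m / (1 + z ^ m) * w - w) := by
          calc f k (z ^ m / (1 + z ^ m) * w)
              = f k (w + (z ^ m / (1 + z ^ m) * w - w)) := by ring_nf
            _ ≤ f k w + f k (z ^ m / (1 + z ^ m) * w - w) := (f k).add_le _ _
        rw [key] at htri
        linarith
      obtain ⟨m, hm1, hm2, hm3⟩ :=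
        (hI.and (hK.and ((eventually_all_finset S).2 hSmall))).exists
      refine ⟨z ^ m / (1 + z ^ m) * w, hm1, fun j hj => ?_⟩
      rcases Finset.mem_insert.mp hj with rfl | hj
      · exact hm2
      · exact hm3 j hj

end Aux

/-- Artin–Whaples weak approximation: given finitely many nontrivial, pairwise
inequivalent absolute values `|·|ᵢ` on a field `K`, any tuple `(xᵢ)` can be
simultaneously approximated: for every `ε > 0` there is `x ∈ K` with
`|x - xᵢ|ᵢ < ε` for all `i`. -/
theorem weak_approximation {K : Type*} [Field K] (n : ℕ)
    (f : Fin n → AbsoluteValue K ℝ)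
    (hnontriv : ∀ i, ∃ x : K, x ≠ 0 ∧ f i x ≠ 1)
    (hineq : ∀ i j, i ≠ j → absTopology (f i) ≠ absTopology (f j)) :
    ∀ (x : Fin n → K) (ε : ℝ), 0 < ε → ∃ y : K, ∀ i, f i (y - x i) < ε := by
  intro x ε hε
  have hpair : ∀ i j, i ≠ j → ∃ a : K, f j a < 1 ∧ 1 ≤ f i a := by
    intro i j hij
    by_contra h
    push_neg at h
    have H : ∀ a : K, f j a < 1 → f i a < 1 := fun a ha => h a ha
    have hiff := balls_eq_of_imp (f j) (f i) (aux_exists_small (f j) (hnontriv j)) H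
    exact hineq j i (fun hji => hij hji.symm)
      (topology_eq (f j) (f i) hiff (aux_exists_small (f j) (hnontriv j)))
  have hzex : ∀ i : Fin n, ∃ z : K, 1 < f i z ∧ ∀ j, j ≠ i → f j z < 1 := by
    intro i
    obtain ⟨z, hz1, hzS⟩ := main_lemma f hnontriv hpair i (Finset.univ.erase i)
      (Finset.notMem_erase i _)
    exact ⟨z, hz1, fun j hj => hzS j (Finset.mem_erase.mpr ⟨hj, Finset.mem_univ j⟩)⟩
  choose z hz1 hzlt using hzex
  set t : Fin n → ℕ → K := fun j m => (z j) ^ m / (1 + (z j) ^ m) with ht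
  have hmain : ∀ i : Fin n,
      Tendsto (fun m : ℕ => f i (∑ j, x j * t j m - x i)) atTop (𝓝 0) := by
    intro i
    set d : Fin n → ℕ → K := fun j m => if j = i then x i * (t i m - 1) else x j * t j m
      with hd
    have hsum : ∀ m : ℕ, ∑ j, x j * t j m - x i = ∑ j, d j m := by
      intro m
      have h1 : ∀ j, d j m = x j * t j m + (if j = i then -x i else 0) := by
        intro j
        simp only [hd]
        split_ifs with h
        · subst h; ring
        · rw [add_zero]
      rw [Finset.sum_congr rfl fun j _ => h1 j, Finset.sum_add_distrib,
        Finset.sum_ite_eq' Finset.univ i fun _ => -x i, if_pos (Finset.mem_univ i)]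
      ring
    have hterm : ∀ j : Fin n, Tendsto (fun m : ℕ => f i (d j m)) atTop (𝓝 0) := by
      intro j
      by_cases h : j = i
      · subst h
        have h0 := (tendsto_L6 (f j) (hz1 j)).const_mul (f j (x j))
        rw [mul_zero] at h0
        refine h0.congr fun m => ?_
        simp only [hd, if_pos rfl, ht, map_mul]
      · have h0 := (tendsto_L7 (f i) (hzlt j i (Ne.symm h))).const_mul (f i (x j))
        rw [mul_zero] at h0
        refine h0.congr fun m => ?_
        simp only [hd, if_neg h, ht, map_mul]
    have hS : Tendsto (fun m : ℕ => ∑ j : Fin n, f i (d j m)) atTop (𝓝 0) := by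
      have := tendsto_finset_sum Finset.univ fun j (_ : j ∈ Finset.univ) => hterm j
      simpa using this
    apply squeeze_zero' (Eventually.of_forall fun m => (f i).nonneg _)
      (Eventually.of_forall fun m => ?_) hS
    rw [hsum m]
    exact (f i).sum_le _ _
  have hev : ∀ᶠ m : ℕ in atTop, ∀ i ∈ Finset.univ, f i (∑ j, x j * t j m - x i) < ε :=
    (eventually_all_finset Finset.univ).2 fun i _ => (hmain i).eventually_lt_const hε
  obtain ⟨m, hm⟩ := hev.exists
  exact ⟨∑ j, x j * t j m, fun i => hm i (Finset.mem_univ i)⟩
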